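/- arXiv:1112.0154 — 3 statements merged into one kernel-verified Lean document; each statement's English description precedes it below -/
import Mathlib

section
/- Let A ≥ B ≥ 0 be real constants and a ∈ L^∞(ℝ_+) with a ≥ 0. If η ∈ H²(ℝ_+) is a solution of η'''' − 2A η'' + B² η = a(s) η on ℝ_+ = (0,∞) with η(0) = η'(0) = η''(0) = 0, then η ≡ 0 on ℝ_+. -/
open MeasureTheory

set_option maxHeartbeats 1000000 in
private lemma aux_zero (A B M : ℝ) (hA : 0 ≤ A) (hM : 0 ≤ M) (a η : ℝ → ℝ)
    (ha_bdd : ∀ s, |a s| ≤ M)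
    (hη : ContDiff ℝ 4 η)
    (hode : ∀ s, 0 < s →
      iteratedDeriv 4 η s - 2 * A * iteratedDeriv 2 η s + B ^ 2 * η s = a s * η s)
    (h0 : η 0 = 0) (h0' : deriv η 0 = 0) (h0'' : iteratedDeriv 2 η 0 = 0)
    (h0''' : iteratedDeriv 3 η 0 = 0) :
    ∀ s, 0 ≤ s → η s = 0 := by
  have hD0 : Differentiable ℝ η := hη.differentiable (by norm_num)
  have hD2 : Differentiable ℝ (iteratedDeriv 2 η) :=
    hη.differentiable_iteratedDeriv 2 (by norm_num)
  have hD3 : Differentiable ℝ (iteratedDeriv 3 η) :=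
    hη.differentiable_iteratedDeriv 3 (by norm_num)
  have hD1 : Differentiable ℝ (deriv η) := by
    have := hη.differentiable_iteratedDeriv 1 (by norm_num)
    rwa [iteratedDeriv_one] at this
  have e2 : deriv (deriv η) = iteratedDeriv 2 η := by
    rw [iteratedDeriv_succ, iteratedDeriv_one]
  have e3 : deriv (iteratedDeriv 2 η) = iteratedDeriv 3 η := (iteratedDeriv_succ).symm
  have e4 : deriv (iteratedDeriv 3 η) = iteratedDeriv 4 η := (iteratedDeriv_succ).symm
  set y : ℝ → ℝ := fun s =>
    η s ^ 2 + deriv η s ^ 2 + iteratedDeriv 2 η s ^ 2 + iteratedDeriv 3 η s ^ 2 with hy_def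
  have hyD : ∀ s : ℝ, HasDerivAt y
      (2 * (η s * deriv η s + deriv η s * iteratedDeriv 2 η s +
        iteratedDeriv 2 η s * iteratedDeriv 3 η s +
        iteratedDeriv 3 η s * iteratedDeriv 4 η s)) s := by
    intro s
    have h0' : HasDerivAt η (deriv η s) s := (hD0 s).hasDerivAt
    have h1' : HasDerivAt (deriv η) (iteratedDeriv 2 η s) s := by
      have := (hD1 s).hasDerivAt; rwa [e2] at this
    have h2' : HasDerivAt (iteratedDeriv 2 η) (iteratedDeriv 3 η s) s := by
      have := (hD2 s).hasDerivAt; rwa [e3] at this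
    have h3' : HasDerivAt (iteratedDeriv 3 η) (iteratedDeriv 4 η s) s := by
      have := (hD3 s).hasDerivAt; rwa [e4] at this
    have := (((h0'.pow 2).add (h1'.pow 2)).add (h2'.pow 2)).add (h3'.pow 2)
    refine this.congr_deriv ?_
    norm_num
    ring
  set K : ℝ := 2 + 2 * A + M + B ^ 2 with hK_def
  have hyK : ∀ s : ℝ, 0 < s → deriv y s ≤ K * y s := by
    intro s hs
    rw [(hyD s).deriv]
    have hode' := hode s hs
    have hab := abs_le.1 (ha_bdd s)
    set u0 := η s; set u1 := deriv η s; set u2 := iteratedDeriv 2 η s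
    set u3 := iteratedDeriv 3 η s; set u4 := iteratedDeriv 4 η s
    have h1 : 2 * (u0 * u1) ≤ u0 ^ 2 + u1 ^ 2 := by nlinarith [sq_nonneg (u0 - u1)]
    have h2 : 2 * (u1 * u2) ≤ u1 ^ 2 + u2 ^ 2 := by nlinarith [sq_nonneg (u1 - u2)]
    have h3 : 2 * (u2 * u3) ≤ u2 ^ 2 + u3 ^ 2 := by nlinarith [sq_nonneg (u2 - u3)]
    have h4 : 2 * (u3 * (2 * A * u2)) ≤ 2 * A * (u2 ^ 2 + u3 ^ 2) := by
      nlinarith [mul_nonneg hA (sq_nonneg (u2 - u3))]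
    have h5 : 2 * (u3 * ((a s - B ^ 2) * u0)) ≤ (M + B ^ 2) * (u0 ^ 2 + u3 ^ 2) := by
      nlinarith [mul_nonneg (by nlinarith : (0:ℝ) ≤ M + B ^ 2 - (a s - B ^ 2))
          (sq_nonneg (u0 + u3)),
        mul_nonneg (by nlinarith : (0:ℝ) ≤ M + B ^ 2 + (a s - B ^ 2)) (sq_nonneg (u0 - u3))]
    have hu4 : u4 = 2 * A * u2 + (a s - B ^ 2) * u0 := by linarith [hode']
    have : 2 * (u0 * u1 + u1 * u2 + u2 * u3 + u3 * u4)
        = 2 * (u0 * u1) + 2 * (u1 * u2) + 2 * (u2 * u3) + 2 * (u3 * (2 * A * u2))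
          + 2 * (u3 * ((a s - B ^ 2) * u0)) := by rw [hu4]; ring
    have hy_eval : y s = u0 ^ 2 + u1 ^ 2 + u2 ^ 2 + u3 ^ 2 := rfl
    rw [this, hy_eval, hK_def]
    nlinarith [sq_nonneg u0, sq_nonneg u1, sq_nonneg u2, sq_nonneg u3,
      mul_nonneg hM (sq_nonneg u1), mul_nonneg hA (sq_nonneg u0),
      mul_nonneg hA (sq_nonneg u1), mul_nonneg hM (sq_nonneg u2),
      mul_nonneg (sq_nonneg B) (sq_nonneg u1), mul_nonneg (sq_nonneg B) (sq_nonneg u2)]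
  set g : ℝ → ℝ := fun s => y s * Real.exp (-K * s) with hg_def
  have hyDiff : Differentiable ℝ y := fun s => (hyD s).differentiableAt
  have hgD : ∀ s : ℝ, HasDerivAt g
      (deriv y s * Real.exp (-K * s) + y s * (Real.exp (-K * s) * (-K * 1))) s := by
    intro s
    exact (hyDiff s).hasDerivAt.mul ((hasDerivAt_id s).const_mul (-K)).exp
  have hgDiff : Differentiable ℝ g := fun s => (hgD s).differentiableAt
  have hanti : AntitoneOn g (Set.Ici (0 : ℝ)) := by
    apply antitoneOn_of_deriv_nonpos (convex_Ici 0) hgDiff.continuous.continuousOn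
      hgDiff.differentiableOn
    intro x hx
    rw [interior_Ici] at hx
    rw [(hgD x).deriv]
    have h1 := hyK x hx
    have hy0 : 0 ≤ y x := by positivity
    have hexp : 0 < Real.exp (-K * x) := Real.exp_pos _
    nlinarith [mul_le_mul_of_nonneg_right h1 hexp.le]
  intro s hs
  have hg0 : g 0 = 0 := by
    simp [hg_def, hy_def, h0, h0', h0'', h0''']
  have hle : g s ≤ 0 := by
    rw [← hg0]
    exact hanti (Set.self_mem_Ici) hs hs
  have hy0 : 0 ≤ y s := by positivity
  have hexp : 0 < Real.exp (-K * s) := Real.exp_pos _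
  have hys : y s = 0 := by
    rcases hy0.lt_or_eq with h | h
    · exfalso; have : 0 < g s := mul_pos h hexp; linarith
    · exact h.symm
  have : η s ^ 2 = 0 := by
    have := sq_nonneg (deriv η s); have := sq_nonneg (iteratedDeriv 2 η s)
    have := sq_nonneg (iteratedDeriv 3 η s); have := sq_nonneg (η s)
    have hy_eval : y s = η s ^ 2 + deriv η s ^ 2 + iteratedDeriv 2 η s ^ 2
        + iteratedDeriv 3 η s ^ 2 := rfl
    rw [hy_eval] at hys
    nlinarith
  exact pow_eq_zero_iff (by norm_num) |>.1 this


set_option maxHeartbeats 1000000 in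
private lemma aux_pos (A B : ℝ) (hAB : B ≤ A) (hB : 0 ≤ B) (a η : ℝ → ℝ)
    (ha_nonneg : ∀ s, 0 ≤ a s)
    (hη : ContDiff ℝ 4 η)
    (hL2 : MemLp η 2 (volume.restrict (Set.Ioi (0 : ℝ))))
    (hode : ∀ s, 0 < s →
      iteratedDeriv 4 η s - 2 * A * iteratedDeriv 2 η s + B ^ 2 * η s = a s * η s)
    (h0 : η 0 = 0) (h0' : deriv η 0 = 0) (h0'' : iteratedDeriv 2 η 0 = 0)
    (hγ : 0 < iteratedDeriv 3 η 0) :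
    False := by
  have hA : 0 ≤ A := hB.trans hAB
  have hD0 : Differentiable ℝ η := hη.differentiable (by norm_num)
  have hD2 : Differentiable ℝ (iteratedDeriv 2 η) :=
    hη.differentiable_iteratedDeriv 2 (by norm_num)
  have hD3 : Differentiable ℝ (iteratedDeriv 3 η) :=
    hη.differentiable_iteratedDeriv 3 (by norm_num)
  have hD1 : Differentiable ℝ (deriv η) := by
    have := hη.differentiable_iteratedDeriv 1 (by norm_num)
    rwa [iteratedDeriv_one] at this
  have e2 : deriv (deriv η) = iteratedDeriv 2 η := by
    rw [iteratedDeriv_succ, iteratedDeriv_one]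
  have e3 : deriv (iteratedDeriv 2 η) = iteratedDeriv 3 η := (iteratedDeriv_succ).symm
  have e4 : deriv (iteratedDeriv 3 η) = iteratedDeriv 4 η := (iteratedDeriv_succ).symm
  -- the factorization constants
  set d : ℝ := Real.sqrt (A ^ 2 - B ^ 2) with hd_def
  have hd0 : 0 ≤ d := Real.sqrt_nonneg _
  have hd2 : d ^ 2 = A ^ 2 - B ^ 2 := Real.sq_sqrt (by nlinarith)
  have hdA : d ≤ A := by nlinarith
  set p : ℝ := A + d with hp_def
  set q : ℝ := A - d with hq_def
  have hp0 : 0 ≤ p := by positivity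
  have hq0 : 0 ≤ q := by simp [hq_def]; linarith
  have hpq : p * q = B ^ 2 := by rw [hp_def, hq_def]; nlinarith
  have hsum : p + q = 2 * A := by rw [hp_def, hq_def]; ring
  -- w and its derivative w1
  set w : ℝ → ℝ := fun s => iteratedDeriv 2 η s - q * η s with hw_def
  set w1 : ℝ → ℝ := fun s => iteratedDeriv 3 η s - q * deriv η s with hw1_def
  set γ : ℝ := iteratedDeriv 3 η 0 with hγ_def
  have hw0 : w 0 = 0 := by simp [hw_def, h0, h0'']
  have hw10 : w1 0 = γ := by simp [hw1_def, hγ_def, h0']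
  have hwD : ∀ s : ℝ, HasDerivAt w (w1 s) s := by
    intro s
    have h2' : HasDerivAt (iteratedDeriv 2 η) (iteratedDeriv 3 η s) s := by
      have := (hD2 s).hasDerivAt; rwa [e3] at this
    have h0d : HasDerivAt η (deriv η s) s := (hD0 s).hasDerivAt
    exact h2'.sub (h0d.const_mul q)
  have hw1D : ∀ s : ℝ, HasDerivAt w1 (iteratedDeriv 4 η s - q * iteratedDeriv 2 η s) s := by
    intro s
    have h3' : HasDerivAt (iteratedDeriv 3 η) (iteratedDeriv 4 η s) s := by
      have := (hD3 s).hasDerivAt; rwa [e4] at this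
    have h1' : HasDerivAt (deriv η) (iteratedDeriv 2 η s) s := by
      have := (hD1 s).hasDerivAt; rwa [e2] at this
    exact h3'.sub (h1'.const_mul q)
  have hw1_eq : ∀ s : ℝ, 0 < s →
      iteratedDeriv 4 η s - q * iteratedDeriv 2 η s = p * w s + a s * η s := by
    intro s hs
    have h := hode s hs
    have hw_eval : w s = iteratedDeriv 2 η s - q * η s := rfl
    rw [hw_eval]
    linear_combination h - iteratedDeriv 2 η s * hsum + η s * hpq
  have hwC : Continuous w := by
    exact hD2.continuous.sub (continuous_const.mul hD0.continuous)
  have hw1C : Continuous w1 := by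
    exact hD3.continuous.sub (continuous_const.mul hD1.continuous)
  have hηC : Continuous η := hD0.continuous
  -- Step A: positivity near 0
  obtain ⟨δ, hδ0, hδpos⟩ : ∃ δ > 0, ∀ s ∈ Set.Icc (0:ℝ) δ,
      0 < iteratedDeriv 3 η s ∧ 0 < w1 s := by
    have hU : IsOpen {s : ℝ | 0 < iteratedDeriv 3 η s ∧ 0 < w1 s} :=
      (isOpen_lt continuous_const hD3.continuous).inter (isOpen_lt continuous_const hw1C)
    have h0U : (0:ℝ) ∈ {s : ℝ | 0 < iteratedDeriv 3 η s ∧ 0 < w1 s} := by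
      constructor
      · exact hγ
      · rw [hw10]; exact hγ
    obtain ⟨ε, hε, hball⟩ := Metric.isOpen_iff.1 hU 0 h0U
    refine ⟨ε / 2, by positivity, fun s hs => hball ?_⟩
    rw [Metric.mem_ball, Real.dist_eq, sub_zero, abs_of_nonneg hs.1]
    linarith [hs.2]
  -- positivity of η, deriv η, it2, w on (0, δ]
  have hposδ : ∀ s ∈ Set.Ioc (0:ℝ) δ, 0 < η s ∧ 0 < w s := by
    have h2mono : StrictMonoOn (iteratedDeriv 2 η) (Set.Icc 0 δ) := by
      apply strictMonoOn_of_deriv_pos (convex_Icc 0 δ) hD2.continuous.continuousOn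
      intro x hx
      rw [interior_Icc] at hx
      rw [e3]
      exact (hδpos x ⟨hx.1.le, hx.2.le⟩).1
    have h2pos : ∀ s ∈ Set.Ioc (0:ℝ) δ, 0 < iteratedDeriv 2 η s := by
      intro s hs
      have := h2mono (Set.left_mem_Icc.2 hδ0.le) ⟨hs.1.le, hs.2⟩ hs.1
      rwa [h0''] at this
    have h1mono : StrictMonoOn (deriv η) (Set.Icc 0 δ) := by
      apply strictMonoOn_of_deriv_pos (convex_Icc 0 δ) hD1.continuous.continuousOn
      intro x hx
      rw [interior_Icc] at hx
      rw [e2]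
      exact h2pos x ⟨hx.1, hx.2.le⟩
    have h1pos : ∀ s ∈ Set.Ioc (0:ℝ) δ, 0 < deriv η s := by
      intro s hs
      have := h1mono (Set.left_mem_Icc.2 hδ0.le) ⟨hs.1.le, hs.2⟩ hs.1
      rwa [h0'] at this
    have h0mono : StrictMonoOn η (Set.Icc 0 δ) := by
      apply strictMonoOn_of_deriv_pos (convex_Icc 0 δ) hηC.continuousOn
      intro x hx
      rw [interior_Icc] at hx
      exact h1pos x ⟨hx.1, hx.2.le⟩
    have hwmono : StrictMonoOn w (Set.Icc 0 δ) := by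
      apply strictMonoOn_of_deriv_pos (convex_Icc 0 δ) hwC.continuousOn
      intro x hx
      rw [interior_Icc] at hx
      rw [(hwD x).deriv]
      exact (hδpos x ⟨hx.1.le, hx.2.le⟩).2
    intro s hs
    constructor
    · have := h0mono (Set.left_mem_Icc.2 hδ0.le) ⟨hs.1.le, hs.2⟩ hs.1
      rwa [h0] at this
    · have := hwmono (Set.left_mem_Icc.2 hδ0.le) ⟨hs.1.le, hs.2⟩ hs.1
      rwa [hw0] at this
  -- Step B: global nonnegativity
  have hpos : ∀ s : ℝ, 0 < s → 0 ≤ η s ∧ 0 ≤ w s := by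
    by_contra hcon
    push_neg at hcon
    obtain ⟨t, ht0, htbad⟩ := hcon
    set bad : Set ℝ := {s : ℝ | 0 < s ∧ (η s < 0 ∨ w s < 0)} with hbad_def
    have hne : bad.Nonempty := by
      refine ⟨t, ht0, ?_⟩
      rcases lt_or_ge (η t) 0 with h | h
      · exact Or.inl h
      · exact Or.inr (htbad h)
    have hbdd : BddBelow bad := ⟨0, fun s hs => hs.1.le⟩
    set T : ℝ := sInf bad with hT_def
    have hδT : δ ≤ T := by
      apply le_csInf hne
      intro s hs
      by_contra hlt
      push_neg at hlt
      have hp2 := hposδ s ⟨hs.1, hlt.le⟩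
      rcases hs.2 with h | h <;> linarith [hp2.1, hp2.2]
    have hT0 : 0 < T := lt_of_lt_of_le hδ0 hδT
    have hnn : ∀ s, 0 < s → s < T → 0 ≤ η s ∧ 0 ≤ w s := by
      intro s hs hsT
      by_contra hk
      push_neg at hk
      have hsbad : s ∈ bad := by
        refine ⟨hs, ?_⟩
        rcases lt_or_ge (η s) 0 with h | h
        · exact Or.inl h
        · exact Or.inr (hk h)
      exact absurd (csInf_le hbdd hsbad) (not_le.2 hsT)
    have hC : IsClosed {s : ℝ | 0 ≤ η s ∧ 0 ≤ w s} :=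
      (isClosed_le continuous_const hηC).inter (isClosed_le continuous_const hwC)
    have hsub : Set.Ico (0:ℝ) T ⊆ {s : ℝ | 0 ≤ η s ∧ 0 ≤ w s} := by
      intro s hs
      rcases eq_or_lt_of_le hs.1 with h | h
      · simp only [Set.mem_setOf_eq, ← h, h0, hw0, le_refl, and_self]
      · exact hnn s h hs.2
    have hnnIcc : ∀ s ∈ Set.Icc (0:ℝ) T, 0 ≤ η s ∧ 0 ≤ w s := by
      intro s hs
      have hcl : s ∈ closure (Set.Ico (0:ℝ) T) := by
        rw [closure_Ico (ne_of_lt hT0)]; exact hs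
      exact (hC.closure_subset_iff.2 hsub) hcl
    have hw1mono : MonotoneOn w1 (Set.Icc 0 T) := by
      apply monotoneOn_of_deriv_nonneg (convex_Icc 0 T) hw1C.continuousOn
        (fun x _ => ((hw1D x).differentiableAt).differentiableWithinAt)
      intro x hx
      rw [interior_Icc] at hx
      rw [(hw1D x).deriv, hw1_eq x hx.1]
      have h := hnnIcc x ⟨hx.1.le, hx.2.le⟩
      have h2 := ha_nonneg x
      nlinarith [mul_nonneg hp0 h.2, mul_nonneg h2 h.1]
    have hw1ge : ∀ s ∈ Set.Icc (0:ℝ) T, γ ≤ w1 s := by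
      intro s hs
      have := hw1mono (Set.left_mem_Icc.2 hT0.le) hs hs.1
      rwa [hw10] at this
    have hwmono : StrictMonoOn w (Set.Icc 0 T) := by
      apply strictMonoOn_of_deriv_pos (convex_Icc 0 T) hwC.continuousOn
      intro x hx
      rw [interior_Icc] at hx
      rw [(hwD x).deriv]
      exact lt_of_lt_of_le hγ (hw1ge x ⟨hx.1.le, hx.2.le⟩)
    have hwTpos : 0 < w T := by
      have := hwmono (Set.left_mem_Icc.2 hT0.le) (Set.right_mem_Icc.2 hT0.le) hT0
      rwa [hw0] at this
    have h1mono : MonotoneOn (deriv η) (Set.Icc 0 T) := by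
      apply monotoneOn_of_deriv_nonneg (convex_Icc 0 T) hD1.continuous.continuousOn
        (fun x _ => (hD1 x).differentiableWithinAt)
      intro x hx
      rw [interior_Icc] at hx
      rw [e2]
      have h := hnnIcc x ⟨hx.1.le, hx.2.le⟩
      have hit2 : iteratedDeriv 2 η x = w x + q * η x := by
        have : w x = iteratedDeriv 2 η x - q * η x := rfl
        linarith [this]
      rw [hit2]
      nlinarith [mul_nonneg hq0 h.1, h.2]
    have h1nn : ∀ s ∈ Set.Icc (0:ℝ) T, 0 ≤ deriv η s := by
      intro s hs
      have := h1mono (Set.left_mem_Icc.2 hT0.le) hs hs.1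
      rwa [h0'] at this
    have hηmono : MonotoneOn η (Set.Icc 0 T) := by
      apply monotoneOn_of_deriv_nonneg (convex_Icc 0 T) hηC.continuousOn
        (fun x _ => (hD0 x).differentiableWithinAt)
      intro x hx
      rw [interior_Icc] at hx
      exact h1nn x ⟨hx.1.le, hx.2.le⟩
    have hηTpos : 0 < η T := by
      have h1 := (hposδ δ ⟨hδ0, le_rfl⟩).1
      have h2 := hηmono (Set.mem_Icc.2 ⟨hδ0.le, hδT⟩) (Set.right_mem_Icc.2 hT0.le) hδT
      linarith
    have hV : IsOpen {s : ℝ | 0 < η s ∧ 0 < w s} :=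
      (isOpen_lt continuous_const hηC).inter (isOpen_lt continuous_const hwC)
    obtain ⟨ε, hε, hball⟩ := Metric.isOpen_iff.1 hV T ⟨hηTpos, hwTpos⟩
    obtain ⟨s, hsbad, hslt⟩ := (csInf_lt_iff hbdd hne).1 (show sInf bad < T + ε by
      rw [← hT_def]; linarith)
    have hTs : T ≤ s := csInf_le hbdd hsbad
    have hmem : s ∈ Metric.ball T ε := by
      rw [Metric.mem_ball, Real.dist_eq, abs_of_nonneg (by linarith)]
      linarith
    have hsV := hball hmem
    rcases hsbad.2 with h | h <;> linarith [hsV.1, hsV.2]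
  -- Step C: global growth and the L² contradiction
  have hw1mono : MonotoneOn w1 (Set.Ici 0) := by
    apply monotoneOn_of_deriv_nonneg (convex_Ici 0) hw1C.continuousOn
      (fun x _ => ((hw1D x).differentiableAt).differentiableWithinAt)
    intro x hx
    rw [interior_Ici] at hx
    rw [(hw1D x).deriv, hw1_eq x hx]
    have h := hpos x hx
    have h2 := ha_nonneg x
    nlinarith [mul_nonneg hp0 h.2, mul_nonneg h2 h.1]
  have hw1ge : ∀ s, 0 ≤ s → γ ≤ w1 s := by
    intro s hs
    have := hw1mono (Set.self_mem_Ici) hs hs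
    rwa [hw10] at this
  have hwlin : ∀ s, 0 ≤ s → γ * s ≤ w s := by
    intro s hs
    have hmono : MonotoneOn (fun s => w s - γ * s) (Set.Ici 0) := by
      apply monotoneOn_of_deriv_nonneg (convex_Ici 0)
        (Continuous.continuousOn (by fun_prop (disch := assumption)))
        (fun x _ => (((hwD x).sub ((hasDerivAt_id x).const_mul γ)).differentiableAt).differentiableWithinAt)
      intro x hx
      rw [interior_Ici] at hx
      rw [((hwD x).sub ((hasDerivAt_id x).const_mul γ)).deriv]
      have := hw1ge x hx.le
      linarith
    have := hmono (Set.self_mem_Ici) hs hs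
    simp only [hw0] at this
    linarith
  have hit2ge : ∀ s, 0 ≤ s → γ * s ≤ iteratedDeriv 2 η s := by
    intro s hs
    have hit2 : iteratedDeriv 2 η s = w s + q * η s := by
      have : w s = iteratedDeriv 2 η s - q * η s := rfl
      linarith [this]
    rcases eq_or_lt_of_le hs with h | h
    · rw [← h, h0'']; simp
    · have h1 := hpos s h
      rw [hit2]
      nlinarith [hwlin s hs, mul_nonneg hq0 h1.1]
  have hd1ge : ∀ s, 0 ≤ s → γ / 2 * s ^ 2 ≤ deriv η s := by
    intro s hs
    have hmono : MonotoneOn (fun s => deriv η s - γ / 2 * s ^ 2) (Set.Ici 0) := by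
      apply monotoneOn_of_deriv_nonneg (convex_Ici 0)
        (Continuous.continuousOn (show Continuous (fun s => deriv η s - γ / 2 * s ^ 2) from
          hD1.continuous.sub (continuous_const.mul (continuous_pow 2))))
      · intro x _
        have hder : HasDerivAt (fun s => deriv η s - γ / 2 * s ^ 2)
            (iteratedDeriv 2 η x - γ / 2 * (2 * x ^ 1)) x := by
          have h1' : HasDerivAt (deriv η) (iteratedDeriv 2 η x) x := by
            have := (hD1 x).hasDerivAt; rwa [e2] at this
          exact h1'.sub ((hasDerivAt_pow 2 x).const_mul (γ / 2))
        exact hder.differentiableAt.differentiableWithinAt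
      · intro x hx
        rw [interior_Ici] at hx
        have hder : HasDerivAt (fun s => deriv η s - γ / 2 * s ^ 2)
            (iteratedDeriv 2 η x - γ / 2 * (2 * x ^ 1)) x := by
          have h1' : HasDerivAt (deriv η) (iteratedDeriv 2 η x) x := by
            have := (hD1 x).hasDerivAt; rwa [e2] at this
          exact h1'.sub ((hasDerivAt_pow 2 x).const_mul (γ / 2))
        rw [hder.deriv]
        have := hit2ge x hx.le
        nlinarith
    have := hmono (Set.self_mem_Ici) hs hs
    simp only [h0'] at this
    nlinarith [this]
  have hηge : ∀ s, 0 ≤ s → γ / 6 * s ^ 3 ≤ η s := by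
    intro s hs
    have hmono : MonotoneOn (fun s => η s - γ / 6 * s ^ 3) (Set.Ici 0) := by
      apply monotoneOn_of_deriv_nonneg (convex_Ici 0)
        (Continuous.continuousOn (by fun_prop (disch := assumption)))
      · intro x _
        have hder : HasDerivAt (fun s => η s - γ / 6 * s ^ 3)
            (deriv η x - γ / 6 * (3 * x ^ 2)) x :=
          (hD0 x).hasDerivAt.sub ((hasDerivAt_pow 3 x).const_mul (γ / 6))
        exact hder.differentiableAt.differentiableWithinAt
      · intro x hx
        rw [interior_Ici] at hx
        have hder : HasDerivAt (fun s => η s - γ / 6 * s ^ 3)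
            (deriv η x - γ / 6 * (3 * x ^ 2)) x :=
          (hD0 x).hasDerivAt.sub ((hasDerivAt_pow 3 x).const_mul (γ / 6))
        rw [hder.deriv]
        have := hd1ge x hx.le
        nlinarith
    have := hmono (Set.self_mem_Ici) hs hs
    simp only [h0] at this
    nlinarith [this]
  -- the L² contradiction
  have hc : ∀ s ∈ Set.Ioi (1:ℝ), γ / 6 ≤ η s := by
    intro s hs
    rw [Set.mem_Ioi] at hs
    have h1 := hηge s (by linarith)
    have hs3 : (1:ℝ) ≤ s ^ 3 := one_le_pow₀ hs.le
    nlinarith [mul_le_mul_of_nonneg_left hs3 (by positivity : (0:ℝ) ≤ γ / 6)]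
  have hL2' : MemLp η 2 (volume.restrict (Set.Ioi (1:ℝ))) :=
    hL2.mono_measure (Measure.restrict_mono (Set.Ioi_subset_Ioi zero_le_one) le_rfl)
  have hconst : MemLp (fun _ : ℝ => γ / 6) 2 (volume.restrict (Set.Ioi (1:ℝ))) := by
    apply MemLp.of_le hL2' aestronglyMeasurable_const
    rw [ae_restrict_iff' measurableSet_Ioi]
    apply Filter.Eventually.of_forall
    intro s hs
    rw [Real.norm_eq_abs, Real.norm_eq_abs, abs_of_pos (by positivity)]
    exact le_trans (hc s hs) (le_abs_self _)
  rw [memLp_const_iff (by norm_num) (by norm_num)] at hconst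
  rcases hconst with h | h
  · have : γ / 6 ≠ 0 := by positivity
    exact this h
  · rw [Measure.restrict_apply_univ, Real.volume_Ioi] at h
    exact absurd h (by simp)

/-- Uniqueness lemma for a linear fourth-order ODE on `ℝ₊ = (0,∞)`:
if `A ≥ B ≥ 0`, `a ∈ L^∞` with `a ≥ 0`, and `η ∈ H²(ℝ₊)` solves
`η'''' - 2A η'' + B² η = a η` with `η(0) = η'(0) = η''(0) = 0`, then `η ≡ 0` on `ℝ₊`. -/
theorem linear_fourth_order_uniqueness (A B : ℝ) (hAB : B ≤ A) (hB : 0 ≤ B)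
    (a η : ℝ → ℝ)
    (ha_meas : Measurable a) (ha_bdd : ∃ M, ∀ s, |a s| ≤ M)
    (ha_nonneg : ∀ s, 0 ≤ a s)
    (hη : ContDiff ℝ 4 η)
    (hL2 : MemLp η 2 (volume.restrict (Set.Ioi (0 : ℝ))))
    (hL2' : MemLp (deriv η) 2 (volume.restrict (Set.Ioi (0 : ℝ))))
    (hL2'' : MemLp (iteratedDeriv 2 η) 2 (volume.restrict (Set.Ioi (0 : ℝ))))
    (hode : ∀ s, 0 < s →
      iteratedDeriv 4 η s - 2 * A * iteratedDeriv 2 η s + B ^ 2 * η s = a s * η s)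
    (h0 : η 0 = 0) (h0' : deriv η 0 = 0) (h0'' : iteratedDeriv 2 η 0 = 0) :
    ∀ s, 0 ≤ s → η s = 0 := by
  rcases lt_trichotomy (iteratedDeriv 3 η 0) 0 with h | h | h
  · exfalso
    refine aux_pos A B hAB hB a (fun s => -η s) ha_nonneg hη.neg hL2.neg ?_ ?_ ?_ ?_ ?_
    · intro s hs
      simp only [iteratedDeriv_fun_neg]
      linear_combination -(hode s hs)
    · simp only [h0, neg_zero]
    · rw [← iteratedDeriv_one, iteratedDeriv_fun_neg, iteratedDeriv_one, h0', neg_zero]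
    · rw [iteratedDeriv_fun_neg, h0'', neg_zero]
    · rw [iteratedDeriv_fun_neg]
      linarith
  · obtain ⟨M, hM⟩ := ha_bdd
    have hM0 : 0 ≤ M := le_trans (abs_nonneg _) (hM 0)
    exact aux_zero A B M (hB.trans hAB) hM0 a η hM hη hode h0 h0' h0'' h
  · exact (aux_pos A B hAB hB a η ha_nonneg hη hL2 hode h0 h0' h0'' h).elim
end

section
/- Let q > 2 and A, B > 0 satisfy A/B = (q² + 4)/(4q). Then the function w(s) = C (cosh(νs))^{−4/(q−2)}, with ν² = ((q−2)²/(2(q²+4))) A and C^{q−2} = (2q(q+2)(3q−2)/(q²+4)²) A², is a solution of w'''' − 2A w'' + B² w = |w|^{q−2} w on ℝ. -/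
/-- Explicit homoclinic solution: if `q > 2`, `A, B > 0` with `A/B = (q²+4)/(4q)`,
then `w(s) = C (cosh νs)^{-4/(q-2)}`, with `ν² = ((q-2)²/(2(q²+4))) A` and
`C^{q-2} = (2q(q+2)(3q-2)/(q²+4)²) A²`, solves `w'''' − 2A w'' + B² w = |w|^{q−2} w` on `ℝ`. -/
theorem explicit_solution (q A B ν C : ℝ) (hq : 2 < q) (hA : 0 < A) (hB : 0 < B)
    (hAB : A / B = (q ^ 2 + 4) / (4 * q))
    (hν : 0 < ν) (hν2 : ν ^ 2 = (q - 2) ^ 2 / (2 * (q ^ 2 + 4)) * A)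
    (hC : 0 < C) (hCq : C ^ (q - 2) = 2 * q * (q + 2) * (3 * q - 2) / (q ^ 2 + 4) ^ 2 * A ^ 2) :
    ∀ s : ℝ,
      iteratedDeriv 4 (fun s => C * Real.cosh (ν * s) ^ (-(4 / (q - 2)))) s
        - 2 * A * iteratedDeriv 2 (fun s => C * Real.cosh (ν * s) ^ (-(4 / (q - 2)))) s
        + B ^ 2 * (C * Real.cosh (ν * s) ^ (-(4 / (q - 2))))
      = |C * Real.cosh (ν * s) ^ (-(4 / (q - 2)))| ^ (q - 2)
          * (C * Real.cosh (ν * s) ^ (-(4 / (q - 2)))) := by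
  have hq2 : (0:ℝ) < q - 2 := by linarith
  have hq2' : q - 2 ≠ 0 := ne_of_gt hq2
  have hq0 : (0:ℝ) < q := by linarith
  have hPpos : (0:ℝ) < q ^ 2 + 4 := by positivity
  have hP : (q ^ 2 + 4) ≠ 0 := ne_of_gt hPpos
  set α : ℝ := 4 / (q - 2) with hα
  have hcp : ∀ x : ℝ, (0:ℝ) < Real.cosh x := Real.cosh_pos
  -- derivative of cosh(νs)^β
  have G : ∀ (β : ℝ) (s : ℝ), HasDerivAt (fun s => Real.cosh (ν * s) ^ β)
      (ν * β * (Real.sinh (ν * s) * Real.cosh (ν * s) ^ (β - 1))) s := by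
    intro β s
    have h1 : HasDerivAt (fun s : ℝ => ν * s) ν s := by
      simpa using (hasDerivAt_id s).const_mul ν
    have h3 := (h1.cosh).rpow_const (p := β) (Or.inl (ne_of_gt (hcp _)))
    convert h3 using 1
    ring
  -- derivative of sinh(νs) * cosh(νs)^β
  have H : ∀ (β : ℝ) (s : ℝ),
      HasDerivAt (fun s => Real.sinh (ν * s) * Real.cosh (ν * s) ^ β)
      (ν * ((1 + β) * Real.cosh (ν * s) ^ (β + 1) - β * Real.cosh (ν * s) ^ (β - 1))) s := by
    intro β s
    have h1 : HasDerivAt (fun s : ℝ => ν * s) ν s := by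
      simpa using (hasDerivAt_id s).const_mul ν
    have h2 := (h1.sinh).mul ((h1.cosh).rpow_const (p := β) (Or.inl (ne_of_gt (hcp _))))
    refine h2.congr_deriv (Eq.symm ?_)
    have hc := hcp (ν * s)
    have e1 : Real.cosh (ν*s) ^ (β+1) = Real.cosh (ν*s) ^ β * Real.cosh (ν*s) :=
      Real.rpow_add_one (ne_of_gt hc) β
    have e2 : Real.cosh (ν*s) ^ β = Real.cosh (ν*s) ^ (β-1) * Real.cosh (ν*s) := by
      have := Real.rpow_add_one (ne_of_gt hc) (β-1)
      rw [show β - 1 + 1 = β by ring] at this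
      exact this
    have e3 : Real.sinh (ν*s) * Real.sinh (ν*s) = Real.cosh (ν*s) * Real.cosh (ν*s) - 1 := by
      have h := Real.sinh_sq (ν*s); nlinarith [h]
    linear_combination (ν*(1+β))*e1 + (ν*β*Real.cosh (ν*s))*e2
      - (ν*β*Real.cosh (ν*s)^(β-1))*e3
  -- first derivative
  have d1 : ∀ s, HasDerivAt (fun s => C * Real.cosh (ν * s) ^ (-α))
      (C * (ν * (-α) * (Real.sinh (ν * s) * Real.cosh (ν * s) ^ (-α - 1)))) s :=
    fun s => (G (-α) s).const_mul C
  -- second derivative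
  have d2 : ∀ s, HasDerivAt (fun s => C * (ν * (-α) * (Real.sinh (ν * s) * Real.cosh (ν * s) ^ (-α - 1))))
      (C * ν^2 * (α^2 * Real.cosh (ν*s) ^ (-α) - α*(α+1) * Real.cosh (ν*s) ^ (-α - 2))) s := by
    intro s
    have h := ((H (-α - 1) s).const_mul (ν * (-α))).const_mul C
    rw [show -α - 1 + 1 = -α by ring, show -α - 1 - 1 = -α - 2 by ring] at h
    refine h.congr_deriv (Eq.symm ?_)
    ring
  -- third derivative
  have d3 : ∀ s, HasDerivAt (fun s => C * ν^2 * (α^2 * Real.cosh (ν*s) ^ (-α) - α*(α+1) * Real.cosh (ν*s) ^ (-α - 2)))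
      (C * ν^3 * (-α^3 * (Real.sinh (ν*s) * Real.cosh (ν*s) ^ (-α - 1))
        + α*(α+1)*(α+2) * (Real.sinh (ν*s) * Real.cosh (ν*s) ^ (-α - 3)))) s := by
    intro s
    have h := (((G (-α) s).const_mul (α^2)).sub ((G (-α - 2) s).const_mul (α*(α+1)))).const_mul (C * ν^2)
    rw [show -α - 1 = -α - 1 by ring, show -α - 2 - 1 = -α - 3 by ring] at h
    refine h.congr_deriv (Eq.symm ?_)
    ring
  -- fourth derivative
  have d4 : ∀ s, HasDerivAt (fun s => C * ν^3 * (-α^3 * (Real.sinh (ν*s) * Real.cosh (ν*s) ^ (-α - 1))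
        + α*(α+1)*(α+2) * (Real.sinh (ν*s) * Real.cosh (ν*s) ^ (-α - 3))))
      (C * ν^4 * (α^4 * Real.cosh (ν*s) ^ (-α)
        - α^3*(α+1) * Real.cosh (ν*s) ^ (-α - 2)
        - α*(α+1)*(α+2)^2 * Real.cosh (ν*s) ^ (-α - 2)
        + α*(α+1)*(α+2)*(α+3) * Real.cosh (ν*s) ^ (-α - 4))) s := by
    intro s
    have h := (((H (-α - 1) s).const_mul (-α^3)).add ((H (-α - 3) s).const_mul (α*(α+1)*(α+2)))).const_mul (C * ν^3)
    rw [show -α - 1 + 1 = -α by ring, show -α - 1 - 1 = -α - 2 by ring,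
        show -α - 3 + 1 = -α - 2 by ring, show -α - 3 - 1 = -α - 4 by ring] at h
    refine h.congr_deriv (Eq.symm ?_)
    ring
  -- deriv equalities
  have E1 : deriv (fun s => C * Real.cosh (ν * s) ^ (-α))
      = fun s => C * (ν * (-α) * (Real.sinh (ν * s) * Real.cosh (ν * s) ^ (-α - 1))) :=
    funext fun s => (d1 s).deriv
  have E2 : deriv (fun s => C * (ν * (-α) * (Real.sinh (ν * s) * Real.cosh (ν * s) ^ (-α - 1))))
      = fun s => C * ν^2 * (α^2 * Real.cosh (ν*s) ^ (-α) - α*(α+1) * Real.cosh (ν*s) ^ (-α - 2)) :=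
    funext fun s => (d2 s).deriv
  have E3 : deriv (fun s => C * ν^2 * (α^2 * Real.cosh (ν*s) ^ (-α) - α*(α+1) * Real.cosh (ν*s) ^ (-α - 2)))
      = fun s => C * ν^3 * (-α^3 * (Real.sinh (ν*s) * Real.cosh (ν*s) ^ (-α - 1))
        + α*(α+1)*(α+2) * (Real.sinh (ν*s) * Real.cosh (ν*s) ^ (-α - 3))) :=
    funext fun s => (d3 s).deriv
  have E4 : deriv (fun s => C * ν^3 * (-α^3 * (Real.sinh (ν*s) * Real.cosh (ν*s) ^ (-α - 1))
        + α*(α+1)*(α+2) * (Real.sinh (ν*s) * Real.cosh (ν*s) ^ (-α - 3))))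
      = fun s => C * ν^4 * (α^4 * Real.cosh (ν*s) ^ (-α)
        - α^3*(α+1) * Real.cosh (ν*s) ^ (-α - 2)
        - α*(α+1)*(α+2)^2 * Real.cosh (ν*s) ^ (-α - 2)
        + α*(α+1)*(α+2)*(α+3) * Real.cosh (ν*s) ^ (-α - 4)) :=
    funext fun s => (d4 s).deriv
  -- iterated derivatives
  have I2 : iteratedDeriv 2 (fun s => C * Real.cosh (ν * s) ^ (-α))
      = fun s => C * ν^2 * (α^2 * Real.cosh (ν*s) ^ (-α) - α*(α+1) * Real.cosh (ν*s) ^ (-α - 2)) := by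
    show iteratedDeriv (1+1) _ = _
    rw [iteratedDeriv_succ]
    show deriv (iteratedDeriv (0+1) _) = _
    rw [iteratedDeriv_succ, iteratedDeriv_zero, E1, E2]
  have I4 : iteratedDeriv 4 (fun s => C * Real.cosh (ν * s) ^ (-α))
      = fun s => C * ν^4 * (α^4 * Real.cosh (ν*s) ^ (-α)
        - α^3*(α+1) * Real.cosh (ν*s) ^ (-α - 2)
        - α*(α+1)*(α+2)^2 * Real.cosh (ν*s) ^ (-α - 2)
        + α*(α+1)*(α+2)*(α+3) * Real.cosh (ν*s) ^ (-α - 4)) := by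
    show iteratedDeriv (3+1) _ = _
    rw [iteratedDeriv_succ]
    show deriv (iteratedDeriv (2+1) _) = _
    rw [iteratedDeriv_succ]
    show deriv (deriv (iteratedDeriv (1+1) _)) = _
    rw [iteratedDeriv_succ]
    show deriv (deriv (deriv (iteratedDeriv (0+1) _))) = _
    rw [iteratedDeriv_succ, iteratedDeriv_zero, E1, E2, E3, E4]
  -- arithmetic facts
  have e2 : ν^2 * α^2 = 8 * A / (q^2 + 4) := by
    rw [hν2, hα]; field_simp; ring
  have e3 : ν^2 * (α+2)^2 = 2 * q^2 * A / (q^2 + 4) := by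
    rw [hν2, hα]; field_simp; ring
  have hBne : B ≠ 0 := ne_of_gt hB
  have hB' : B = 4 * q * A / (q^2 + 4) := by
    field_simp at hAB
    field_simp
    linarith [hAB]
  have F1 : ν^4 * α^4 - 2 * A * (ν^2 * α^2) + B^2 = 0 := by
    have h44 : ν^4 * α^4 = (ν^2 * α^2)^2 := by ring
    rw [h44, e2, hB']
    field_simp
    ring
  have F2 : ν^2 * α^2 + ν^2 * (α+2)^2 = 2 * A := by
    rw [e2, e3]; field_simp; ring
  have F3 : ν^4 * (α*(α+1)*(α+2)*(α+3)) = C ^ (q - 2) := by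
    rw [hCq]
    have h44 : ν^4 = (ν^2)^2 := by ring
    rw [h44, hν2, hα]
    field_simp
    ring
  intro s
  have hc := hcp (ν * s)
  have hw : (0:ℝ) < C * Real.cosh (ν * s) ^ (-α) := by positivity
  have hRHS : |C * Real.cosh (ν * s) ^ (-α)| ^ (q - 2) * (C * Real.cosh (ν * s) ^ (-α))
      = C ^ (q - 2) * C * Real.cosh (ν * s) ^ (-α - 4) := by
    rw [abs_of_pos hw, Real.mul_rpow hC.le (Real.rpow_nonneg hc.le _),
      ← Real.rpow_mul hc.le, show -α * (q - 2) = -4 by rw [hα]; field_simp,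
      show (-α - 4 : ℝ) = -4 + -α by ring, Real.rpow_add hc]
    ring
  rw [I2, I4, hRHS]
  simp only
  linear_combination (C * Real.cosh (ν*s) ^ (-α)) * F1
    - (C * ν^2 * α * (α+1) * Real.cosh (ν*s) ^ (-α - 2)) * F2
    + (C * Real.cosh (ν*s) ^ (-α - 4)) * F3
end

section
/- Let q > 2, B ∈ ℝ, A ∈ ℝ, and let w : ℝ → ℝ be a C⁴ homoclinic solution of w'''' − 2A w'' + B² w = |w|^{q−2} w (with w and its derivatives up to order three vanishing at ±∞). Then ‖w‖_∞^{q−2} ≤ (q/2) B². -/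
open Filter

private lemma sq_rpow_half (x p : ℝ) : (x ^ 2) ^ (p/2) = |x| ^ p := by
  rw [← sq_abs, ← Real.rpow_natCast |x| 2, ← Real.rpow_mul (abs_nonneg x)]
  norm_num
  ring_nf

/-- A-priori bound on homoclinic solutions of `w'''' − 2A w'' + B² w = |w|^{q−2} w`:
`‖w‖_∞^{q−2} ≤ (q/2) B²`. -/
theorem apriori_bound (A B q : ℝ) (hq : 2 < q) (w : ℝ → ℝ)
    (hw : ContDiff ℝ 4 w)
    (hode : ∀ s, iteratedDeriv 4 w s - 2 * A * iteratedDeriv 2 w s + B ^ 2 * w s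
      = |w s| ^ (q - 2) * w s)
    (hlim : ∀ k ≤ 3, Tendsto (iteratedDeriv k w) atTop (nhds 0) ∧
      Tendsto (iteratedDeriv k w) atBot (nhds 0)) :
    ∀ s : ℝ, |w s| ^ (q - 2) ≤ q / 2 * B ^ 2 := by
  have hq0 : (0:ℝ) < q := by linarith
  have hq2 : (0:ℝ) < q - 2 := by linarith
  have hD : ∀ k : ℕ, k < 4 → ∀ s, HasDerivAt (iteratedDeriv k w)
      (iteratedDeriv (k+1) w s) s := by
    intro k hk s
    have hdiff : Differentiable ℝ (iteratedDeriv k w) :=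
      hw.differentiable_iteratedDeriv k (by exact_mod_cast hk)
    rw [iteratedDeriv_succ]
    exact (hdiff s).hasDerivAt
  set w1 := iteratedDeriv 1 w with hw1
  set w2 := iteratedDeriv 2 w with hw2
  set w3 := iteratedDeriv 3 w with hw3
  set w4 := iteratedDeriv 4 w with hw4
  have h1 : ∀ s, HasDerivAt w (w1 s) s := by
    intro s
    have := hD 0 (by norm_num) s
    rwa [iteratedDeriv_zero] at this
  have h2 : ∀ s, HasDerivAt w1 (w2 s) s := fun s => hD 1 (by norm_num) s
  have h3 : ∀ s, HasDerivAt w2 (w3 s) s := fun s => hD 2 (by norm_num) s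
  have h4 : ∀ s, HasDerivAt w3 (w4 s) s := fun s => hD 3 (by norm_num) s
  have hsq : ∀ s, HasDerivAt (fun s => (w s)^2) (2 * w s * w1 s) s := by
    intro s
    have : HasDerivAt (fun x => w x * w x) (w1 s * w s + w s * w1 s) s := (h1 s).mul (h1 s)
    convert this using 1
    · ext x; ring
    · ring
  set H : ℝ → ℝ := fun s => -(w3 s * w1 s) + (1/2) * (w2 s)^2 + A * (w1 s)^2
      - (1/2) * B^2 * (w s)^2 + (1/q) * ((w s)^2) ^ (q/2) with hHdef
  have hrp : ∀ x : ℝ, ((x^2) ^ (q/2 - 1)) * x = |x| ^ (q-2) * x := by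
    intro x
    rcases eq_or_ne x 0 with h | h
    · simp [h]
    · have h' : (x^2) ^ (q/2 - 1) = |x| ^ (q - 2) := by
        have := sq_rpow_half x (q - 2)
        rw [← this]
        congr 1
        ring
      rw [h']
  have hHderiv : ∀ s, HasDerivAt H 0 s := by
    intro s
    have hrpow : HasDerivAt (fun s => ((w s)^2) ^ (q/2))
        ((q/2) * ((w s)^2) ^ (q/2 - 1) * (2 * w s * w1 s)) s := by
      have hbase : HasDerivAt (fun x : ℝ => x ^ (q/2)) ((q/2) * ((w s)^2) ^ (q/2 - 1)) ((w s)^2) :=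
        Real.hasDerivAt_rpow_const (Or.inr (by linarith))
      exact hbase.comp s (hsq s)
    have hH' : HasDerivAt H
        (-(w4 s * w1 s + w3 s * w2 s) + (1/2) * (2 * w2 s * w3 s) + A * (2 * w1 s * w2 s)
          - (1/2) * B^2 * (2 * w s * w1 s)
          + (1/q) * ((q/2) * ((w s)^2) ^ (q/2 - 1) * (2 * w s * w1 s))) s := by
      have e1 : HasDerivAt (fun s => w3 s * w1 s) (w4 s * w1 s + w3 s * w2 s) s :=
        (h4 s).mul (h2 s)
      have e2 : HasDerivAt (fun s => (w2 s)^2) (2 * w2 s * w3 s) s := by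
        have : HasDerivAt (fun x => w2 x * w2 x) (w3 s * w2 s + w2 s * w3 s) s := (h3 s).mul (h3 s)
        convert this using 1
        · ext x; ring
        · ring
      have e3 : HasDerivAt (fun s => (w1 s)^2) (2 * w1 s * w2 s) s := by
        have : HasDerivAt (fun x => w1 x * w1 x) (w2 s * w1 s + w1 s * w2 s) s := (h2 s).mul (h2 s)
        convert this using 1
        · ext x; ring
        · ring
      exact ((((e1.neg.add (e2.const_mul (1/2))).add (e3.const_mul A)).sub
        ((hsq s).const_mul ((1/2) * B^2))).add (hrpow.const_mul (1/q)))
    convert hH' using 1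
    have key : (1/q) * ((q/2) * ((w s)^2) ^ (q/2 - 1) * (2 * w s * w1 s))
        = (|w s| ^ (q-2) * w s) * w1 s := by
      rw [show (1/q) * ((q/2) * ((w s)^2) ^ (q/2 - 1) * (2 * w s * w1 s))
          = (((w s)^2) ^ (q/2 - 1) * w s) * (1/q * (q/2) * 2) * w1 s by ring,
        hrp (w s)]
      field_simp
    have hw4s : w4 s = 2 * A * w2 s - B^2 * w s + |w s| ^ (q-2) * w s := by
      linarith [hode s]
    rw [key, hw4s]
    ring
  have hHconst : ∀ s t, H s = H t := fun s t =>
    is_const_of_deriv_eq_zero (fun x => (hHderiv x).differentiableAt)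
      (fun x => (hHderiv x).deriv) s t
  -- limits at top/bot
  have l0t := (hlim 0 (by norm_num)).1
  have l0b := (hlim 0 (by norm_num)).2
  rw [iteratedDeriv_zero] at l0t l0b
  have lsqt : Tendsto (fun s => (w s)^2) atTop (nhds 0) := by
    have := l0t.mul l0t; simpa [pow_two] using this
  have lsqb : Tendsto (fun s => (w s)^2) atBot (nhds 0) := by
    have := l0b.mul l0b; simpa [pow_two] using this
  have hHtop : Tendsto H atTop (nhds 0) := by
    have l1 := (hlim 1 (by norm_num)).1
    have l2 := (hlim 2 (by norm_num)).1
    have l3 := (hlim 3 (by norm_num)).1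
    have lrpow : Tendsto (fun s => ((w s)^2) ^ (q/2)) atTop (nhds 0) := by
      have hc : ContinuousAt (fun x : ℝ => x ^ (q/2)) 0 :=
        Real.continuousAt_rpow_const 0 (q/2) (Or.inr (by linarith))
      have := hc.tendsto.comp lsqt
      simpa [Function.comp_def, Real.zero_rpow (by positivity : q/2 ≠ 0)] using this
    have T := ((((l3.mul l1).neg.add ((l2.pow 2).const_mul (1/2))).add
        ((l1.pow 2).const_mul A)).sub (lsqt.const_mul ((1/2) * B^2))).add
        (lrpow.const_mul (1/q))
    rw [hHdef]
    convert T using 2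
    norm_num
  have hH0 : ∀ t, H t = 0 := by
    intro t
    have hconst : Tendsto H atTop (nhds (H t)) :=
      tendsto_const_nhds.congr (fun x => (hHconst t x))
    exact tendsto_nhds_unique hconst hHtop
  by_cases hz : ∀ t, w t = 0
  · intro s
    rw [hz s]
    rw [abs_zero, Real.zero_rpow (ne_of_gt hq2)]
    positivity
  · push_neg at hz
    obtain ⟨t₁, ht₁⟩ := hz
    have hcont : Continuous fun s => (w s)^2 := (hw.continuous).pow 2
    have hco : Tendsto (fun s => (w s)^2) (cocompact ℝ) (nhds 0) := by
      rw [cocompact_eq_atBot_atTop, tendsto_sup]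
      exact ⟨lsqb, lsqt⟩
    have hev : ∀ᶠ x in cocompact ℝ, (w x)^2 ≤ (w t₁)^2 := by
      have hpos : 0 < (w t₁)^2 := by positivity
      exact (hco.eventually_lt_const hpos).mono fun x hx => le_of_lt hx
    obtain ⟨s₀, hs₀⟩ := hcont.exists_forall_ge' t₁ hev
    have h2pos : 0 < (w s₀)^2 := lt_of_lt_of_le (by positivity) (hs₀ t₁)
    have hwne : w s₀ ≠ 0 := fun h => by simp [h] at h2pos
    have hlm : IsLocalMax (fun s => (w s)^2) s₀ := Filter.Eventually.of_forall hs₀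
    have hd0 : 2 * w s₀ * w1 s₀ = 0 := hlm.hasDerivAt_eq_zero (hsq s₀)
    have hw1s0 : w1 s₀ = 0 := by
      rcases mul_eq_zero.mp hd0 with h | h
      · rcases mul_eq_zero.mp h with h' | h'
        · norm_num at h'
        · exact absurd h' hwne
      · exact h
    have hkey : -(w3 s₀ * w1 s₀) + (1/2) * (w2 s₀)^2 + A * (w1 s₀)^2
        - (1/2) * B^2 * (w s₀)^2 + (1/q) * ((w s₀)^2) ^ (q/2) = 0 := hH0 s₀
    rw [hw1s0] at hkey
    have habs : ((w s₀)^2) ^ (q/2) = |w s₀| ^ (q-2) * (w s₀)^2 := by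
      rw [sq_rpow_half, ← sq_abs (w s₀), ← Real.rpow_natCast |w s₀| 2,
        ← Real.rpow_add (abs_pos.mpr hwne)]
      norm_num
    rw [habs] at hkey
    have hineq : (1/q) * (|w s₀| ^ (q-2) * (w s₀)^2) ≤ (1/2) * B^2 * (w s₀)^2 := by
      nlinarith [sq_nonneg (w2 s₀)]
    have step : |w s₀| ^ (q-2) * (w s₀)^2 ≤ q/2 * B^2 * ((w s₀)^2) := by
      have h' := mul_le_mul_of_nonneg_left hineq hq0.le
      calc |w s₀| ^ (q-2) * (w s₀)^2
          = q * ((1/q) * (|w s₀| ^ (q-2) * (w s₀)^2)) := by field_simp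
        _ ≤ q * ((1/2) * B^2 * (w s₀)^2) := h'
        _ = q/2 * B^2 * ((w s₀)^2) := by ring
    have hfin : |w s₀| ^ (q-2) ≤ q/2 * B^2 := le_of_mul_le_mul_right step h2pos
    intro s
    have hsle : |w s| ≤ |w s₀| := by
      rw [← Real.sqrt_sq_eq_abs, ← Real.sqrt_sq_eq_abs (w s₀)]
      exact Real.sqrt_le_sqrt (hs₀ s)
    calc |w s| ^ (q-2) ≤ |w s₀| ^ (q-2) :=
          Real.rpow_le_rpow (abs_nonneg _) hsle hq2.le
      _ ≤ q/2 * B^2 := hfin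
end
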